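/- arXiv:2409.03546 — 2 statements merged into one kernel-verified Lean document; each statement's English description precedes it below -/
import Mathlib

section
/- Let p be a prime and let Λ = ℤ_p⟦T⟧ be the power series ring in one variable over the ring of p-adic integers. If M is a finitely generated Λ-module such that the quotient M/TM is a finite set, then the T-torsion submodule M[T] = {x ∈ M : T·x = 0} is a finite set. -/
open PowerSeries

namespace StmtAux

variable {R : Type*} [CommRing R]

/-- The ideal of `n`-th coefficients of elements of `I` of order `≥ n`. -/
def lead (I : Ideal (PowerSeries R)) (n : ℕ) : Ideal R where
  carrier := {a | ∃ f ∈ I, (∀ i, i < n → coeff i f = 0) ∧ coeff n f = a}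
  add_mem' := by
    rintro a b ⟨f, hf, hford, rfl⟩ ⟨g, hg, hgord, rfl⟩
    exact ⟨f + g, I.add_mem hf hg, fun i hi => by simp [hford i hi, hgord i hi], by simp⟩
  zero_mem' := ⟨0, I.zero_mem, fun i _ => by simp, by simp⟩
  smul_mem' := by
    rintro c a ⟨f, hf, hford, rfl⟩
    exact ⟨C c * f, I.mul_mem_left _ hf,
      fun i hi => by simp [coeff_C_mul, hford i hi], by simp [coeff_C_mul]⟩

theorem lead_mono (I : Ideal (PowerSeries R)) : Monotone (lead I) := by
  apply monotone_nat_of_le_succ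
  rintro n a ⟨f, hf, hford, rfl⟩
  refine ⟨f * X, I.mul_mem_right _ hf, fun i hi => ?_, by rw [coeff_succ_mul_X]⟩
  cases i with
  | zero => exact coeff_zero_mul_X f
  | succ j => rw [coeff_succ_mul_X]; exact hford j (by omega)

theorem isNoetherianRing_powerSeries [IsNoetherianRing R] :
    IsNoetherianRing (PowerSeries R) := by
  rw [isNoetherianRing_iff_ideal_fg]
  intro I
  haveI : IsNoetherian R R := by rwa [← isNoetherianRing_iff]
  obtain ⟨N, hN⟩ := monotone_stabilizes_iff_noetherian.mpr ‹IsNoetherian R R›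
    ⟨lead I, lead_mono I⟩
  -- witnesses at each level
  have hdata : ∀ n : ℕ, ∃ (k : ℕ) (w : Fin k → PowerSeries R),
      (∀ i, w i ∈ I ∧ ∀ j, j < n → coeff j (w i) = 0) ∧
      Ideal.span (Set.range fun i => coeff n (w i)) = lead I n := by
    intro n
    obtain ⟨k, e, he⟩ := Submodule.fg_iff_exists_fin_generating_family.mp
      (IsNoetherian.noetherian (lead I n))
    have hmem : ∀ i, e i ∈ lead I n := fun i =>
      he ▸ Submodule.subset_span (Set.mem_range_self i)
    choose f hfI hford hfc using hmem
    refine ⟨k, f, fun i => ⟨hfI i, hford i⟩, ?_⟩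
    have h2 : (fun i => coeff n (f i)) = e := funext hfc
    rw [h2]; exact he
  choose t w hw hspan using hdata
  -- single reduction step at level n
  have step : ∀ (n d : ℕ) (g : PowerSeries R), lead I (n + d) = lead I n → g ∈ I →
      (∀ j, j < n + d → coeff j g = 0) →
      ∃ r : Fin (t n) → R,
        (g - ∑ i, PowerSeries.C (r i) * w n i * X ^ d) ∈ I ∧
        ∀ j, j < n + d + 1 → coeff j (g - ∑ i, PowerSeries.C (r i) * w n i * X ^ d) = 0 := by
    intro n d g hstab hg hord
    have hmem : coeff (n + d) g ∈ lead I n := hstab ▸ ⟨g, hg, hord, rfl⟩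
    rw [← hspan n] at hmem
    obtain ⟨r, hr⟩ := (Submodule.mem_span_range_iff_exists_fun R).mp hmem
    have hterm : ∀ (j : ℕ) i, coeff j (PowerSeries.C (r i) * w n i * X ^ d)
        = if d ≤ j then r i * coeff (j - d) (w n i) else 0 := by
      intro j i
      rw [coeff_mul_X_pow']
      split_ifs
      · rw [coeff_C_mul]
      · rfl
    refine ⟨r, I.sub_mem hg (Ideal.sum_mem _ fun i _ =>
      Ideal.mul_mem_right _ _ (I.mul_mem_left _ (hw n i).1)), fun j hj => ?_⟩

    rw [map_sub, map_sum]
    rcases lt_or_eq_of_le (Nat.lt_succ_iff.mp hj) with hj' | hj'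
    · rw [hord j hj']
      rw [Finset.sum_congr rfl fun i _ => hterm j i]
      rcases le_or_gt d j with hdj | hdj
      · simp only [if_pos hdj]
        have hz : ∀ i : Fin (t n), r i * coeff (j - d) (w n i) = 0 := by
          intro i
          have hlt : j - d < n := by omega
          rw [(hw n i).2 (j - d) hlt, mul_zero]
        simp [hz]
      · simp [Nat.not_le_of_lt hdj]
    · subst hj'
      rw [Finset.sum_congr rfl fun i _ => hterm _ i]
      simp only [if_pos (Nat.le_add_left d n)]
      have hnd : n + d - d = n := by omega
      rw [hnd]
      have := hr
      simp only [smul_eq_mul] at hr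
      rw [hr, sub_self]
  -- the generating set
  set G : Set (PowerSeries R) := ⋃ n ∈ Finset.range (N + 1), Set.range (w n) with hG
  have hGfin : G.Finite := Set.Finite.biUnion (Finset.range (N + 1)).finite_toSet
    (fun n _ => Set.finite_range (w n))
  have hGI : G ⊆ (I : Set (PowerSeries R)) := by
    intro x hx
    simp only [hG, Set.mem_iUnion] at hx
    obtain ⟨n, _, i, rfl⟩ := hx
    exact (hw n i).1
  have hwG : ∀ n, n ≤ N → ∀ i, w n i ∈ G := by
    intro n hn i
    simp only [hG, Set.mem_iUnion]
    exact ⟨n, Finset.mem_range.mpr (by omega), i, rfl⟩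
  -- main lemma for order ≥ N
  have mainHigh : ∀ g ∈ I, (∀ j, j < N → coeff j g = 0) → g ∈ Ideal.span G := by
    intro g hg hord
    -- choice form of the step
    have step' : ∀ (d : ℕ) (h : PowerSeries R), h ∈ I → (∀ j, j < N + d → coeff j h = 0) →
        ∃ r : Fin (t N) → R,
          (h - ∑ i, PowerSeries.C (r i) * w N i * X ^ d) ∈ I ∧
          ∀ j, j < N + d + 1 → coeff j (h - ∑ i, PowerSeries.C (r i) * w N i * X ^ d) = 0 :=
      fun d h hh hhord => step N d h (hN (N + d) (by omega)).symm hh hhord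
    choose r' h1 h2 using step'
    -- the sequence
    let seq : ∀ d : ℕ, {h : PowerSeries R // h ∈ I ∧ ∀ j, j < N + d → coeff j h = 0} :=
      fun d => Nat.rec (motive := fun d => {h : PowerSeries R // h ∈ I ∧ ∀ j, j < N + d → coeff j h = 0})
        ⟨g, hg, fun j hj => hord j (lt_of_lt_of_le hj (le_of_eq (Nat.add_zero N)))⟩
        (fun d ih => ⟨ih.1 - ∑ i, PowerSeries.C (r' d ih.1 ih.2.1 ih.2.2 i) * w N i * X ^ d,
          h1 d ih.1 ih.2.1 ih.2.2, h2 d ih.1 ih.2.1 ih.2.2⟩) d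
    let rr : ℕ → Fin (t N) → R := fun d => r' d (seq d).1 (seq d).2.1 (seq d).2.2
    have hstep : ∀ d, (seq (d + 1)).1 = (seq d).1 - ∑ i, PowerSeries.C (rr d i) * w N i * X ^ d :=
      fun d => rfl
    -- partial sums
    have hpartial : ∀ K, g - ∑ i, (∑ d ∈ Finset.range K, PowerSeries.C (rr d i) * X ^ d) * w N i
        = (seq K).1 := by
      intro K
      induction K with
      | zero => simp [seq]
      | succ K ih =>
        rw [hstep K, ← ih]
        rw [Finset.sum_congr rfl (fun i (_ : i ∈ Finset.univ) => by
          rw [Finset.sum_range_succ, add_mul])]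
        rw [Finset.sum_add_distrib]
        have : ∀ i : Fin (t N), PowerSeries.C (rr K i) * X ^ K * w N i
            = PowerSeries.C (rr K i) * w N i * X ^ K := by intro i; ring
        rw [Finset.sum_congr rfl fun i _ => this i]
        abel
    -- the limits
    set H : Fin (t N) → PowerSeries R := fun i => PowerSeries.mk fun d => rr d i with hH
    have hfinal : g = ∑ i, H i * w N i := by
      ext d
      have h3 : coeff d (g - ∑ i, (∑ e ∈ Finset.range (d + 1),
          PowerSeries.C (rr e i) * X ^ e) * w N i) = 0 := by
        rw [hpartial (d + 1)]
        exact (seq (d + 1)).2.2 d (by omega)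
      rw [map_sub, sub_eq_zero] at h3
      rw [h3, map_sum, map_sum]
      refine Finset.sum_congr rfl fun i _ => ?_
      rw [coeff_mul, coeff_mul]
      refine Finset.sum_congr rfl fun ab hab => ?_
      have hab' : ab.1 ≤ d := by
        have := Finset.HasAntidiagonal.mem_antidiagonal.mp hab; omega
      have hpoly : coeff ab.1 (∑ e ∈ Finset.range (d + 1),
          PowerSeries.C (rr e i) * X ^ e) = rr ab.1 i := by
        rw [map_sum]
        simp only [coeff_C_mul, coeff_X_pow, mul_ite, mul_one, mul_zero]
        rw [Finset.sum_ite_eq (Finset.range (d + 1)) ab.1 fun e => rr e i]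
        exact if_pos (Finset.mem_range.mpr (by omega))
      rw [hpoly]
      simp [hH, coeff_mk]
    rw [hfinal]
    exact Ideal.sum_mem _ fun i _ =>
      Ideal.mul_mem_left _ _ (Ideal.subset_span (hwG N le_rfl i))
  -- descent
  have descent : ∀ (j : ℕ) (g : PowerSeries R), g ∈ I →
      (∀ i, i < N - j → coeff i g = 0) → g ∈ Ideal.span G := by
    intro j
    induction j with
    | zero => exact fun g hg hord => mainHigh g hg (fun j hj => hord j (by omega))
    | succ j ih =>
      intro g hg hord
      rcases le_or_gt N j with hNj | hNj
      · exact ih g hg (fun i hi => hord i (by omega))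
      · set k := N - (j + 1) with hk
        obtain ⟨r, hI', hord'⟩ := step k 0 g (by rw [add_zero]) hg
          (fun i hi => hord i (by omega))
        have hg' := ih _ hI' (fun i hi => hord' i (by omega))
        have : g = (g - ∑ i, PowerSeries.C (r i) * w k i * X ^ 0)
            + ∑ i, PowerSeries.C (r i) * w k i * X ^ 0 := by ring
        rw [this]
        exact Ideal.add_mem _ hg' (Ideal.sum_mem _ fun i _ =>
          Ideal.mul_mem_right _ _ (Ideal.mul_mem_left _ _
            (Ideal.subset_span (hwG k (by omega) i))))
  refine ⟨hGfin.toFinset, ?_⟩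
  rw [Set.Finite.coe_toFinset]
  refine le_antisymm ?_ ?_
  · rw [Ideal.span_le]; exact hGI
  · exact fun g hg => descent N g hg (fun i hi => by omega)

end StmtAux

set_option maxHeartbeats 1000000 in
/-- If `M` is a finitely generated module over `Λ = ℤ_p⟦T⟧` such that `M/TM` is finite,
then the `T`-torsion submodule `M[T] = {x ∈ M : T·x = 0}` is finite. -/
theorem stmt1 (p : ℕ) [Fact p.Prime]
    (M : Type*) [AddCommGroup M] [Module (PowerSeries ℤ_[p]) M]
    [Module.Finite (PowerSeries ℤ_[p]) M]
    (hfin : Finite (M ⧸ (Ideal.span {(PowerSeries.X : PowerSeries ℤ_[p])} •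
      (⊤ : Submodule (PowerSeries ℤ_[p]) M)))) :
    Set.Finite {x : M | (PowerSeries.X : PowerSeries ℤ_[p]) • x = 0} := by
  classical
  haveI : IsNoetherianRing (PowerSeries ℤ_[p]) := StmtAux.isNoetherianRing_powerSeries
  haveI : IsNoetherian (PowerSeries ℤ_[p]) M :=
    isNoetherian_of_isNoetherianRing_of_finite _ _
  set TM : Submodule (PowerSeries ℤ_[p]) M :=
    Ideal.span {(PowerSeries.X : PowerSeries ℤ_[p])} • (⊤ : Submodule (PowerSeries ℤ_[p]) M)
    with hTM
  haveI : Finite (M ⧸ TM) := hfin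
  set m : ℕ := Nat.card (M ⧸ TM) with hm
  have hm0 : 0 < m := Nat.card_pos
  -- multiplication by m lands in TM
  have hmM : ∀ x : M, ((m : ℕ) : PowerSeries ℤ_[p]) • x ∈ TM := by
    intro x
    rw [Nat.cast_smul_eq_nsmul]
    have h1 : TM.mkQ ((m : ℕ) • x) = 0 := by
      rw [map_nsmul]
      exact card_nsmul_eq_zero'
    rwa [Submodule.mkQ_apply, Submodule.Quotient.mk_eq_zero] at h1
  -- Cayley-Hamilton
  obtain ⟨P, hmonic, hdeg, hcoeff, haeval⟩ :=
    LinearMap.exists_monic_and_coeff_mem_pow_and_aeval_eq_zero_of_range_le_smul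
      (PowerSeries ℤ_[p])
      (algebraMap (PowerSeries ℤ_[p]) (Module.End (PowerSeries ℤ_[p]) M)
        ((m : ℕ) : PowerSeries ℤ_[p]))
      (Ideal.span {(PowerSeries.X : PowerSeries ℤ_[p])})
      (by
        rintro y ⟨x, rfl⟩
        rw [Module.algebraMap_end_apply]
        exact hmM x)
  set n := P.natDegree with hn
  set f : PowerSeries ℤ_[p] := P.eval ((m : ℕ) : PowerSeries ℤ_[p]) with hf
  have hfkill : ∀ x : M, f • x = 0 := by
    intro x
    rw [Polynomial.aeval_algebraMap_apply_eq_algebraMap_eval] at haeval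
    have h2 := congrFun (congrArg DFunLike.coe haeval) x
    simpa only [Module.algebraMap_end_apply, LinearMap.zero_apply] using h2
  have hfsub : f - ((m : ℕ) : PowerSeries ℤ_[p]) ^ n ∈
      Ideal.span {(PowerSeries.X : PowerSeries ℤ_[p])} := by
    have hev : f = (∑ i ∈ Finset.range n, P.coeff i * ((m : ℕ) : PowerSeries ℤ_[p]) ^ i)
        + ((m : ℕ) : PowerSeries ℤ_[p]) ^ n := by
      rw [hf, Polynomial.eval_eq_sum_range, Finset.sum_range_succ, ← hn,
        hmonic.coeff_natDegree, one_mul]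
    rw [hev, add_sub_cancel_right]
    refine Ideal.sum_mem _ fun i hi => Ideal.mul_mem_right _ _ ?_
    exact Ideal.pow_le_self (by have := Finset.mem_range.mp hi; omega) (hcoeff i)
  obtain ⟨b, hb⟩ := Ideal.mem_span_singleton'.mp hfsub
  -- uniform exponent on the X-torsion
  have hkill : ∀ x : M, (PowerSeries.X : PowerSeries ℤ_[p]) • x = 0 →
      ((m ^ n : ℕ) : PowerSeries ℤ_[p]) • x = 0 := by
    intro x hx
    have hfeq : f = ((m : ℕ) : PowerSeries ℤ_[p]) ^ n + b * PowerSeries.X := by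
      rw [hb]; ring
    have h2 := hfkill x
    rw [hfeq, add_smul, mul_smul, hx, smul_zero, add_zero] at h2
    rw [Nat.cast_pow]
    exact h2
  -- the kernel of X
  set K1 : Submodule (PowerSeries ℤ_[p]) M :=
    LinearMap.ker (LinearMap.lsmul (PowerSeries ℤ_[p]) M (PowerSeries.X)) with hK1
  have hK1mem : ∀ x : M, x ∈ K1 ↔ (PowerSeries.X : PowerSeries ℤ_[p]) • x = 0 := by
    intro x
    exact Iff.rfl
  -- p-power exponent
  set m' : ℕ := m ^ n with hm'
  have hm'0 : 0 < m' := pow_pos hm0 n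
  have hm'p : ((m' : ℕ) : ℤ_[p]) ≠ 0 := Nat.cast_ne_zero.mpr (by omega)
  set w : ℕ := ((m' : ℤ_[p])).valuation with hw
  have hpkill : ∀ y ∈ K1, (PowerSeries.C ((p : ℤ_[p]) ^ w)) • y = 0 := by
    intro y hy
    have h1 : (PowerSeries.C ((m' : ℕ) : ℤ_[p])) • y = 0 := by
      rw [map_natCast]
      exact hkill y ((hK1mem y).mp hy)
    have h2 : (↑(PadicInt.unitCoeff hm'p)⁻¹ : ℤ_[p]) * ((m' : ℕ) : ℤ_[p]) = (p : ℤ_[p]) ^ w := by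
      apply mul_left_cancel₀ (Units.ne_zero (PadicInt.unitCoeff hm'p))
      rw [← mul_assoc, ← Units.val_mul, mul_inv_cancel, Units.val_one, one_mul, hw]
      exact PadicInt.unitCoeff_spec hm'p
    rw [← h2, map_mul, mul_smul, h1, smul_zero]
  -- generators of K1
  obtain ⟨s, hs⟩ := IsNoetherian.noetherian K1
  have hsK1 : (s : Set M) ⊆ K1 := hs ▸ Submodule.subset_span
  set W : Submodule ℤ M := Submodule.span ℤ (s : Set M) with hW
  have hWle : ∀ x ∈ W, x ∈ K1 := by
    have h : W ≤ K1.restrictScalars ℤ := Submodule.span_le.mpr fun y hy => hsK1 hy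
    exact fun x hx => h hx
  -- W is stable under the power series action
  have hWsmul : ∀ (a : PowerSeries ℤ_[p]) (x : M), x ∈ W → a • x ∈ W := by
    intro a x hx
    have hxK : x ∈ K1 := hWle x hx
    have hxX : (PowerSeries.X : PowerSeries ℤ_[p]) • x = 0 := (hK1mem x).mp hxK
    set a0 : ℤ_[p] := PowerSeries.constantCoeff a with ha0
    obtain ⟨dd, hdd⟩ : (PowerSeries.X : PowerSeries ℤ_[p]) ∣ (a - PowerSeries.C a0) := by
      rw [PowerSeries.X_dvd_iff]
      simp [ha0]
    have hstep1 : a • x = (PowerSeries.C a0) • x := by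
      have : a = PowerSeries.C a0 + PowerSeries.X * dd := by rw [← hdd]; ring
      rw [this, add_smul, mul_comm PowerSeries.X dd, mul_smul, hxX, smul_zero, add_zero]
    obtain ⟨c, hc⟩ := Ideal.mem_span_singleton'.mp (PadicInt.appr_spec w a0)
    have hstep2 : (PowerSeries.C a0) • x = (a0.appr w : ℤ) • x := by
      have ha0eq : a0 = ((a0.appr w : ℕ) : ℤ_[p]) + c * (p : ℤ_[p]) ^ w := by
        rw [hc]; ring
      have hCp : (PowerSeries.C (c * (p : ℤ_[p]) ^ w)) • x = 0 := by
        have hcx : (PowerSeries.C c) • x ∈ K1 := K1.smul_mem _ hxK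
        rw [map_mul, mul_comm, mul_smul, hpkill _ hcx]
      conv_lhs => rw [ha0eq]
      rw [map_add, add_smul, hCp, add_zero, map_natCast,
        Nat.cast_smul_eq_nsmul, natCast_zsmul]
    rw [hstep1, hstep2]
    exact W.smul_mem _ hx

  have hK1W : ∀ x ∈ K1, x ∈ W := by
    intro x hx
    let W' : Submodule (PowerSeries ℤ_[p]) M :=
      { carrier := (W : Set M)
        add_mem' := fun ha hb => W.add_mem ha hb
        zero_mem' := W.zero_mem
        smul_mem' := fun a y hy => hWsmul a y hy }
    have : K1 ≤ W' := by
      rw [← hs]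
      exact Submodule.span_le.mpr (fun y hy => Submodule.subset_span hy)
    exact this hx
  -- conclude finiteness
  have hWK1 : W = K1.restrictScalars ℤ := by
    apply le_antisymm
    · exact fun x hx => hWle x hx
    · exact fun x hx => hK1W x hx
  haveI : Module.Finite ℤ ↥(K1.restrictScalars ℤ) :=
    Module.Finite.iff_fg.mpr ⟨s, by rw [← hW, hWK1]⟩
  have htor : Module.IsTorsion ℤ ↥(K1.restrictScalars ℤ) := by
    intro x
    have hne : ((m' : ℤ)) ≠ 0 := Int.natCast_ne_zero.mpr (by omega)
    refine ⟨⟨(m' : ℤ), mem_nonZeroDivisors_of_ne_zero hne⟩, ?_⟩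
    apply Subtype.ext
    show ((m' : ℤ)) • (x : M) = 0
    rw [natCast_zsmul, ← Nat.cast_smul_eq_nsmul (PowerSeries ℤ_[p])]
    exact hkill _ ((hK1mem _).mp x.2)
  haveI hfinK1 : Finite ↥(K1.restrictScalars ℤ) := Module.finite_of_fg_torsion _ htor
  have hseteq : {x : M | (PowerSeries.X : PowerSeries ℤ_[p]) • x = 0} = (K1 : Set M) := by
    ext x
    exact (hK1mem x).symm
  rw [hseteq]
  have hfinK1' : Finite ↥(K1 : Set M) := hfinK1
  exact Set.toFinite _
end

section
/- Let p be a prime and n ≥ 1 an integer, and let Φ ∈ ℚ_p[X] be the p^n-th cyclotomic polynomial regarded as a polynomial over the field ℚ_p of p-adic numbers. Let V and W be modules over the polynomial ring ℚ_p[X] such that Φ annihilates V (i.e., Φ·v = 0 for all v ∈ V), and let f : V → W be a ℚ_p[X]-linear map that is not identically zero. Then the image of f has ℚ_p-dimension at least p^n − p^{n−1}. -/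
open Polynomial

/-- The `p^n`-th cyclotomic polynomial is Eisenstein over `ℤ_p` after `X ↦ X + 1`. -/
lemma cyclo_eisenstein (p : ℕ) [hp : Fact p.Prime] (m : ℕ) :
    ((cyclotomic (p ^ (m + 1)) ℤ_[p]).comp (X + 1)).IsEisensteinAt
      (Ideal.span {(p : ℤ_[p])}) := by
  have hZ := cyclotomic_prime_pow_comp_X_add_one_isEisensteinAt p m
  have hne : Ideal.span {(p : ℤ_[p])} ≠ ⊤ := by
    rw [← PadicInt.maximalIdeal_eq_span_p]
    exact (IsLocalRing.maximalIdeal.isMaximal ℤ_[p]).ne_top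
  have hmap : ((cyclotomic (p ^ (m + 1)) ℤ).comp (X + 1)).map
      (Int.castRingHom ℤ_[p]) = (cyclotomic (p ^ (m + 1)) ℤ_[p]).comp (X + 1) := by
    rw [Polynomial.map_comp, map_cyclotomic, Polynomial.map_add, Polynomial.map_one, map_X]
  refine Polynomial.Monic.isEisensteinAt_of_mem_of_notMem ?_ hne ?_ ?_
  · rw [show (X + 1 : ℤ_[p][X]) = X + C 1 by simp]
    exact (cyclotomic.monic _ ℤ_[p]).comp (monic_X_add_C 1)
      (by rw [natDegree_X_add_C]; exact one_ne_zero)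
  · intro k hk
    have hdeg : ((cyclotomic (p ^ (m + 1)) ℤ).comp (X + 1)).natDegree
        = ((cyclotomic (p ^ (m + 1)) ℤ_[p]).comp (X + 1)).natDegree := by
      rw [← hmap]
      exact (Polynomial.natDegree_map_eq_of_injective
        (by exact_mod_cast Int.cast_injective) _).symm
    have := hZ.mem (n := k) (by rw [hdeg]; exact hk)
    rw [Ideal.submodule_span_eq, Ideal.mem_span_singleton] at this
    obtain ⟨c, hc⟩ := this
    rw [Ideal.mem_span_singleton, ← hmap, Polynomial.coeff_map, hc]
    exact ⟨(c : ℤ_[p]), by simp⟩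
  · rw [Ideal.span_singleton_pow, Ideal.mem_span_singleton]
    have h0 : ((cyclotomic (p ^ (m + 1)) ℤ_[p]).comp (X + 1)).coeff 0 = (p : ℤ_[p]) := by
      rw [coeff_zero_eq_eval_zero, eval_comp, eval_add, eval_X, eval_one, zero_add,
        ← Polynomial.eval_one_cyclotomic_prime_pow (R := ℤ_[p]) (p := p) m]
    rw [h0]
    intro ⟨c, hc⟩
    have hp0 : (p : ℤ_[p]) ≠ 0 := by exact_mod_cast (Nat.cast_ne_zero (R := ℤ_[p])).2 hp.out.ne_zero
    have : (1 : ℤ_[p]) = p * c := by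
      have := hc
      rw [pow_two, mul_assoc] at this
      exact mul_left_cancel₀ hp0 (by rw [mul_one]; exact this)
    have : IsUnit (p : ℤ_[p]) := IsUnit.of_mul_eq_one c this.symm
    have hmem : (p : ℤ_[p]) ∈ IsLocalRing.maximalIdeal ℤ_[p] := by
      rw [PadicInt.maximalIdeal_eq_span_p]; exact Ideal.mem_span_singleton_self _
    exact (IsLocalRing.maximalIdeal.isMaximal ℤ_[p]).ne_top
      (Ideal.eq_top_of_isUnit_mem _ hmem this)

lemma cyclo_irred (p : ℕ) [hp : Fact p.Prime] (n : ℕ) (hn : 1 ≤ n) :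
    Irreducible (cyclotomic (p ^ n) ℚ_[p]) := by
  obtain ⟨m, rfl⟩ : ∃ m, n = m + 1 := ⟨n - 1, (Nat.succ_pred_eq_of_pos hn).symm⟩
  have hE := cyclo_eisenstein p m
  have hprime : (Ideal.span {(p : ℤ_[p])}).IsPrime := by
    rw [← PadicInt.maximalIdeal_eq_span_p]
    exact (IsLocalRing.maximalIdeal.isMaximal ℤ_[p]).isPrime
  have hmonic : ((cyclotomic (p ^ (m + 1)) ℤ_[p]).comp (X + 1)).Monic := by
    rw [show (X + 1 : ℤ_[p][X]) = X + C 1 by simp]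
    exact (cyclotomic.monic _ ℤ_[p]).comp (monic_X_add_C 1)
      (by rw [natDegree_X_add_C]; exact one_ne_zero)
  have hdegpos : 0 < ((cyclotomic (p ^ (m + 1)) ℤ_[p]).comp (X + 1)).natDegree := by
    rw [show (X + 1 : ℤ_[p][X]) = X + C 1 by simp, natDegree_comp, natDegree_X_add_C, mul_one,
      natDegree_cyclotomic]
    exact Nat.totient_pos.2 (pow_pos hp.out.pos _)
  have hirrZ : Irreducible ((cyclotomic (p ^ (m + 1)) ℤ_[p]).comp (X + 1)) :=
    hE.irreducible hprime hmonic.isPrimitive hdegpos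
  have hirrQ : Irreducible ((cyclotomic (p ^ (m + 1)) ℚ_[p]).comp (X + 1)) := by
    have := (hmonic.irreducible_iff_irreducible_map_fraction_map (K := ℚ_[p])).1 hirrZ
    rwa [Polynomial.map_comp, map_cyclotomic, Polynomial.map_add, Polynomial.map_one, map_X]
      at this
  -- transfer along the Taylor algebra equivalence
  let e : ℚ_[p][X] ≃ₐ[ℚ_[p]] ℚ_[p][X] :=
    AlgEquiv.ofAlgHom (taylorAlgHom 1) (taylorAlgHom (-1))
      (by ext f : 1; show taylor 1 (taylor (-1) X) = X; rw [taylor_taylor]; norm_num [taylor_zero])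
      (by ext f : 1; show taylor (-1) (taylor 1 X) = X; rw [taylor_taylor]; norm_num [taylor_zero])
  have he : e (cyclotomic (p ^ (m + 1)) ℚ_[p])
      = (cyclotomic (p ^ (m + 1)) ℚ_[p]).comp (X + 1) := by
    show taylor 1 _ = _
    rw [taylor_apply]
    norm_num
  rw [← he] at hirrQ
  exact (MulEquiv.irreducible_iff e.toMulEquiv).1 hirrQ

/-- If `Φ` is the `p^n`-th cyclotomic polynomial over `ℚ_p` (for `n ≥ 1`), `V`, `W` are
`ℚ_p[X]`-modules with `Φ` annihilating `V`, and `f : V → W` is a nonzero `ℚ_p[X]`-linear map,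
then the image of `f` has `ℚ_p`-dimension at least `p^n − p^(n−1)`. -/
theorem stmt3 (p : ℕ) [Fact p.Prime] (n : ℕ) (hn : 1 ≤ n)
    (V W : Type*) [AddCommGroup V] [AddCommGroup W]
    [Module ℚ_[p] V] [Module ℚ_[p] W]
    [Module (Polynomial ℚ_[p]) V] [Module (Polynomial ℚ_[p]) W]
    [IsScalarTower ℚ_[p] (Polynomial ℚ_[p]) V]
    [IsScalarTower ℚ_[p] (Polynomial ℚ_[p]) W]
    (hann : ∀ v : V, (Polynomial.cyclotomic (p ^ n) ℚ_[p]) • v = 0)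
    (f : V →ₗ[Polynomial ℚ_[p]] W) (hf : f ≠ 0) :
    ((p ^ n - p ^ (n - 1) : ℕ) : Cardinal) ≤ Module.rank ℚ_[p] (LinearMap.range f) := by
  have hp : Fact p.Prime := inferInstance
  set Φ : ℚ_[p][X] := cyclotomic (p ^ n) ℚ_[p] with hΦdef
  have hirr : Irreducible Φ := cyclo_irred p n hn
  set d : ℕ := p ^ n - p ^ (n - 1) with hddef
  have hd : Φ.natDegree = d := by
    obtain ⟨m, rfl⟩ : ∃ m, n = m + 1 := ⟨n - 1, (Nat.succ_pred_eq_of_pos hn).symm⟩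
    rw [hΦdef, natDegree_cyclotomic, Nat.totient_prime_pow hp.out (Nat.succ_pos m), hddef]
    simp only [Nat.add_sub_cancel]
    rw [Nat.mul_sub, mul_one, mul_comm, ← pow_succ']
    simp
  obtain ⟨v, hv⟩ : ∃ v : V, f v ≠ 0 := by
    by_contra h
    push_neg at h
    exact hf (LinearMap.ext fun x => by rw [h x, LinearMap.zero_apply])
  set w : W := f v with hwdef
  have hΦw : Φ • w = 0 := by rw [hwdef, ← map_smul, hann v, map_zero]
  -- the family of powers applied to w
  set u : Fin d → W := fun i => (X ^ (i : ℕ) : ℚ_[p][X]) • w with hudef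
  have hmem : ∀ i : Fin d, u i ∈ LinearMap.range f := fun i =>
    ⟨(X ^ (i : ℕ) : ℚ_[p][X]) • v, by rw [map_smul]⟩
  have hli : LinearIndependent ℚ_[p] u := by
    rw [Fintype.linearIndependent_iff]
    intro c hc
    set g : ℚ_[p][X] := ∑ i : Fin d, C (c i) * X ^ (i : ℕ) with hgdef
    have hgw : g • w = 0 := by
      calc g • w = ∑ i : Fin d, (C (c i) * X ^ (i : ℕ)) • w := Finset.sum_smul
        _ = ∑ i : Fin d, c i • u i := by
            refine Finset.sum_congr rfl fun i _ => ?_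
            rw [← Polynomial.smul_eq_C_mul, smul_assoc, hudef]
        _ = 0 := hc
    have hg0 : g = 0 := by
      by_contra hg
      have hdvd : ¬ Φ ∣ g := by
        intro hdvd
        refine hg (Polynomial.eq_zero_of_dvd_of_degree_lt hdvd ?_)
        calc g.degree < (d : WithBot ℕ) := degree_sum_fin_lt c
          _ = Φ.degree := by
              rw [Polynomial.degree_eq_natDegree hirr.ne_zero, hd]
      obtain ⟨a, b, hab⟩ := (hirr.coprime_iff_not_dvd.2 hdvd)
      refine hv ?_
      calc f v = (1 : ℚ_[p][X]) • w := (one_smul _ _).symm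
        _ = (a * Φ + b * g) • w := by rw [hab]
        _ = a • (Φ • w) + b • (g • w) := by rw [add_smul, mul_smul, mul_smul]
        _ = 0 := by rw [hΦw, hgw, smul_zero, smul_zero, add_zero]
    intro i
    have : g.coeff (i : ℕ) = c i := by
      rw [hgdef]
      simp [Polynomial.finset_sum_coeff, Polynomial.coeff_C_mul, Polynomial.coeff_X_pow,
        Fin.val_eq_val, Finset.sum_ite_eq']
    rw [← this, hg0, Polynomial.coeff_zero]
  -- transfer to the range of f
  set u' : Fin d → LinearMap.range f := fun i => ⟨u i, hmem i⟩ with hu'def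
  have hli' : LinearIndependent ℚ_[p] u' :=
    LinearIndependent.of_comp
      (LinearMap.restrictScalars ℚ_[p] (LinearMap.range f).subtype) hli
  have hcard := hli'.cardinal_lift_le_rank
  rw [Cardinal.mk_fin, Cardinal.lift_natCast, Cardinal.nat_le_lift_iff] at hcard
  exact hcard
end
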